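/- arXiv:2112.04784 — 3 statements merged into one kernel-verified Lean document; each statement's English description precedes it below -/
import Mathlib

section
/- Let M ≅ ℤ^n be a lattice, N its dual lattice, σ ⊆ N_ℝ a strongly convex rational polyhedral cone, and ρ an extremal ray of σ with ρ^⊥ its orthogonal complement in M_ℝ. Then the subgroup of M generated by σ^∨ ∩ ρ^⊥ ∩ M equals ρ^⊥ ∩ M. -/
open Finset Matrix

/-- Farkas' lemma over ℚ, finite index version, proved by induction on the
generating finset. -/
lemma farkas_aux {n : ℕ} {ι : Type} [DecidableEq ι] (T : Finset ι)
    (a : ι → (Fin n → ℚ)) (x : Fin n → ℚ) :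
    (∃ c : ι → ℚ, (∀ i, 0 ≤ c i) ∧ x = ∑ i ∈ T, c i • a i) ∨
    (∃ u : Fin n → ℚ, (∀ i ∈ T, 0 ≤ u ⬝ᵥ a i) ∧ u ⬝ᵥ x < 0) := by
  induction T using Finset.induction_on generalizing a x with
  | empty =>
      by_cases hx : x = 0
      · exact Or.inl ⟨fun _ => 0, fun _ => le_rfl, by simp [hx]⟩
      · refine Or.inr ⟨-x, by simp, ?_⟩
        have h1 : (0:ℚ) ≤ x ⬝ᵥ x := by
          simp only [dotProduct]
          exact Finset.sum_nonneg fun i _ => mul_self_nonneg _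
        have h2 : (0:ℚ) < x ⬝ᵥ x := by
          rcases lt_or_eq_of_le h1 with h | h
          · exact h
          · exact absurd (dotProduct_self_eq_zero.mp h.symm) hx
        simp only [neg_dotProduct]
        linarith
  | @insert j T' hj ih =>
      rcases ih a x with ⟨c, hc, hx⟩ | ⟨u, hu, hux⟩
      · refine Or.inl ⟨fun i => if i = j then 0 else c i,
          fun i => by by_cases h : i = j <;> simp [h, hc i], ?_⟩
        rw [Finset.sum_insert hj]
        beta_reduce
        rw [if_pos rfl, zero_smul, zero_add, hx]
        refine Finset.sum_congr rfl fun i hi => ?_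
        have hij : i ≠ j := fun h => hj (h ▸ hi)
        rw [if_neg hij]
      · by_cases h0 : 0 ≤ u ⬝ᵥ a j
        · refine Or.inr ⟨u, ?_, hux⟩
          intro i hi
          rcases Finset.mem_insert.mp hi with rfl | hi
          · exact h0
          · exact hu i hi
        · push_neg at h0
          set b := a j with hb
          have hβ : u ⬝ᵥ b ≠ 0 := ne_of_lt h0
          set proj : (Fin n → ℚ) → (Fin n → ℚ) :=
            fun z => z - ((u ⬝ᵥ z) / (u ⬝ᵥ b)) • b with hproj
          rcases ih (fun i => proj (a i)) (proj x) with ⟨c, hc, hx'⟩ | ⟨w, hw, hwx⟩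
          · -- x is in the cone
            set μ : ℚ := (u ⬝ᵥ x - ∑ i ∈ T', c i * (u ⬝ᵥ a i)) / (u ⬝ᵥ b) with hμ
            have hμpos : 0 < μ := by
              apply div_pos_of_neg_of_neg _ h0
              have : 0 ≤ ∑ i ∈ T', c i * (u ⬝ᵥ a i) :=
                Finset.sum_nonneg fun i hi => mul_nonneg (hc i) (hu i hi)
              linarith
            refine Or.inl ⟨fun i => if i = j then μ else c i, fun i => by
              by_cases h : i = j <;> simp [h, hμpos.le, hc i], ?_⟩
            rw [Finset.sum_insert hj]
            beta_reduce
            rw [if_pos rfl]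
            have hsum : (∑ i ∈ T', (if i = j then μ else c i) • a i)
                = ∑ i ∈ T', c i • a i :=
              Finset.sum_congr rfl fun i hi => by
                have hij : i ≠ j := fun h => hj (h ▸ hi)
                rw [if_neg hij]
            rw [show (∑ x ∈ T', (fun i => if i = j then μ else c i) x • a x) = ∑ i ∈ T', c i • a i from hsum]
            -- expand hx'
            have hx'' : x - ((u ⬝ᵥ x) / (u ⬝ᵥ b)) • b
                = (∑ i ∈ T', c i • a i)
                  - ((∑ i ∈ T', c i * (u ⬝ᵥ a i)) / (u ⬝ᵥ b)) • b := by
              have h := hx'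
              simp only [hproj] at h
              rw [h]
              simp only [smul_sub, smul_smul, Finset.sum_sub_distrib, ← Finset.sum_smul]
              congr 2
              rw [Finset.sum_div]
              exact Finset.sum_congr rfl fun i hi => by ring
            rw [sub_eq_iff_eq_add] at hx''
            rw [hx'', hμ, sub_div, sub_smul]
            abel
          · -- separating functional
            refine Or.inr ⟨w - ((w ⬝ᵥ b) / (u ⬝ᵥ b)) • u, ?_, ?_⟩
            · have key : ∀ z, (w - ((w ⬝ᵥ b) / (u ⬝ᵥ b)) • u) ⬝ᵥ z = w ⬝ᵥ proj z := by
                intro z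
                simp only [hproj, sub_dotProduct, smul_dotProduct, dotProduct_sub,
                  dotProduct_smul, smul_eq_mul]
                ring
              intro i hi
              rcases Finset.mem_insert.mp hi with rfl | hi
              · have hpb : proj (a i) = 0 := by
                  simp only [hproj, ← hb, div_self hβ, one_smul, sub_self]
                rw [key, hpb, dotProduct_zero]
              · rw [key]; exact hw i hi
            · have key : (w - ((w ⬝ᵥ b) / (u ⬝ᵥ b)) • u) ⬝ᵥ x = w ⬝ᵥ proj x := by
                simp only [hproj, sub_dotProduct, smul_dotProduct, dotProduct_sub,
                  dotProduct_smul, smul_eq_mul]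
                ring
              rw [key]; exact hwx

/-- For a strongly convex rational polyhedral cone `σ ⊆ N_ℝ` with generator set
`S ⊆ N = ℤ^n` and an extremal ray `ρ = ℝ≥0·v` with `v ∈ S`, the subgroup of `M = ℤ^n`
generated by `σ^∨ ∩ ρ^⊥ ∩ M` equals `ρ^⊥ ∩ M`. -/
theorem subgroup_generated_by_dual_cap_perp
    (n : ℕ) (S : Finset (Fin n → ℤ)) (v : Fin n → ℤ) (hvS : v ∈ S)
    (σ : Set (Fin n → ℝ))
    (hσ : σ = {x | ∃ c : (Fin n → ℤ) → ℝ, (∀ s, 0 ≤ c s) ∧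
        x = ∑ s ∈ S, c s • (fun i => (s i : ℝ))})
    (hstrong : ∀ x ∈ σ, -x ∈ σ → x = 0)
    (hextremal : ∀ x ∈ σ, ∀ y ∈ σ,
        (∃ t : ℝ, 0 ≤ t ∧ x + y = t • fun i => (v i : ℝ)) →
        ∃ t : ℝ, 0 ≤ t ∧ x = t • fun i => (v i : ℝ)) :
    (AddSubgroup.closure
        {m : Fin n → ℤ | (∀ s ∈ S, 0 ≤ ∑ i, m i * s i) ∧ ∑ i, m i * v i = 0}
      : Set (Fin n → ℤ))
      = {m : Fin n → ℤ | ∑ i, m i * v i = 0} := by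
  classical
  -- abbreviations
  set qc : (Fin n → ℤ) → (Fin n → ℚ) := fun s i => (s i : ℚ) with hqc
  set Ray : (Fin n → ℤ) → Prop :=
    fun s => ∃ t : ℝ, 0 ≤ t ∧ (fun i => (s i : ℝ)) = t • fun i => (v i : ℝ) with hRay
  -- Step 1: for every generator not on the ray, there is a rational separating functional
  have key : ∀ s₀ : Fin n → ℤ, ∃ u : Fin n → ℚ,
      (s₀ ∈ S ∧ ¬ Ray s₀) →
      (∀ s ∈ S, 0 ≤ u ⬝ᵥ qc s) ∧ u ⬝ᵥ qc v = 0 ∧ 0 < u ⬝ᵥ qc s₀ := by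
    intro s₀
    by_cases hs₀ : s₀ ∈ S ∧ ¬ Ray s₀
    case neg => exact ⟨0, fun h => absurd h hs₀⟩
    obtain ⟨hs₀S, hs₀r⟩ := hs₀
    rcases farkas_aux (ι := Option (Fin n → ℤ)) (insert none (S.image some))
        (fun o => o.elim (-(qc v)) qc) (-(qc s₀)) with ⟨c, hc, hx⟩ | ⟨u, hu, hux⟩
    · -- cone membership contradicts extremality
      exfalso
      apply hs₀r
      rw [hRay]
      rw [Finset.sum_insert (by simp),
        Finset.sum_image (fun s _ t _ h => Option.some_injective _ h)] at hx
      have hreal : ∀ ii, (s₀ ii : ℝ) + ∑ s ∈ S, (c (some s) : ℝ) * (s ii : ℝ)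
          = (c none : ℝ) * (v ii : ℝ) := by
        intro ii
        have h := congrFun hx ii
        simp only [Pi.add_apply, Pi.smul_apply, Pi.neg_apply, Finset.sum_apply,
          smul_eq_mul, Option.elim, hqc] at h
        have h' : (s₀ ii : ℚ) + ∑ s ∈ S, c (some s) * (s ii : ℚ)
            = c none * (v ii : ℚ) := by linarith [h]
        have h'' := congrArg (fun q : ℚ => (q : ℝ)) h'
        push_cast at h''
        exact h''
      have hxσ : (fun i => (s₀ i : ℝ)) ∈ σ := by
        rw [hσ]
        refine ⟨fun s => if s = s₀ then 1 else 0, fun s => by by_cases h : s = s₀ <;> simp [h], ?_⟩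
        simp only [ite_smul, one_smul, zero_smul]
        rw [Finset.sum_ite_eq' S s₀ fun s => (fun i => (s i : ℝ)), if_pos hs₀S]
      have hyσ : (∑ s ∈ S, ((c (some s) : ℝ)) • (fun i => (s i : ℝ))) ∈ σ := by
        rw [hσ]
        refine ⟨fun s => if s ∈ S then (c (some s) : ℝ) else 0,
          fun s => by by_cases h : s ∈ S <;> simp [h, Rat.cast_nonneg.mpr (hc (some s))], ?_⟩
        refine (Finset.sum_congr rfl fun s hs => ?_).symm
        simp only [if_pos hs]
      refine hextremal _ hxσ _ hyσ ⟨(c none : ℝ), by exact_mod_cast hc none, ?_⟩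
      funext ii
      simp only [Pi.add_apply, Pi.smul_apply, Finset.sum_apply, smul_eq_mul]
      exact hreal ii
    · -- the separating functional works
      refine ⟨u, fun _ => ⟨fun s hs => ?_, ?_, ?_⟩⟩
      · have := hu (some s) (Finset.mem_insert_of_mem (Finset.mem_image_of_mem some hs))
        simpa using this
      · have h1 := hu (some v) (Finset.mem_insert_of_mem (Finset.mem_image_of_mem some hvS))
        have h2 := hu none (Finset.mem_insert_self _ _)
        simp only [Option.elim, dotProduct_neg] at h1 h2
        linarith
      · simp only [dotProduct_neg] at hux
        linarith
  choose U hU using key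
  set rest : Finset (Fin n → ℤ) := S.filter (fun s => ¬ Ray s) with hrest
  set ut : Fin n → ℚ := ∑ s ∈ rest, U s with hut
  have sum_dot : ∀ (T : Finset (Fin n → ℤ)) (f : (Fin n → ℤ) → (Fin n → ℚ)) (z : Fin n → ℚ),
      (∑ i ∈ T, f i) ⬝ᵥ z = ∑ i ∈ T, f i ⬝ᵥ z := by
    intro T f z
    simp only [dotProduct, Finset.sum_apply, Finset.sum_mul]
    rw [Finset.sum_comm]
  have hmemrest : ∀ t ∈ rest, t ∈ S ∧ ¬ Ray t := by
    intro t ht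
    exact Finset.mem_filter.mp ht
  have hut1 : ∀ s ∈ S, 0 ≤ ut ⬝ᵥ qc s := by
    intro s hs
    rw [hut, sum_dot]
    exact Finset.sum_nonneg fun t ht => (hU t (hmemrest t ht)).1 s hs
  have hut2 : ut ⬝ᵥ qc v = 0 := by
    rw [hut, sum_dot]
    exact Finset.sum_eq_zero fun t ht => (hU t (hmemrest t ht)).2.1
  have hut3 : ∀ s ∈ rest, 0 < ut ⬝ᵥ qc s := by
    intro s hs
    rw [hut, sum_dot]
    exact Finset.sum_pos' (fun t ht => (hU t (hmemrest t ht)).1 s (hmemrest s hs).1)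
      ⟨s, hs, (hU s (hmemrest s hs)).2.2⟩
  -- Step 2: scale to an integer vector
  obtain ⟨w, d, hd, hw⟩ : ∃ (w : Fin n → ℤ) (d : ℚ), 0 < d ∧ ∀ i, (w i : ℚ) = d * ut i := by
    refine ⟨fun i => (∏ j ∈ Finset.univ.erase i, ((ut j).den : ℤ)) * (ut i).num,
      (∏ j, ((ut j).den : ℚ)), ?_, ?_⟩
    · exact Finset.prod_pos fun j _ => by exact_mod_cast (ut j).pos
    · intro i
      push_cast
      rw [← Finset.mul_prod_erase Finset.univ (fun j => ((ut j).den : ℚ)) (Finset.mem_univ i)]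
      have hnum : ((ut i).num : ℚ) = ut i * ((ut i).den : ℚ) := (Rat.mul_den_eq_num (ut i)).symm
      rw [hnum]
      ring
  have castdot : ∀ s : Fin n → ℤ, ((∑ i, w i * s i : ℤ) : ℚ) = d * (ut ⬝ᵥ qc s) := by
    intro s
    push_cast
    simp only [dotProduct, hqc, Finset.mul_sum]
    exact Finset.sum_congr rfl fun i _ => by rw [hw i]; ring
  have hwv : ∑ i, w i * v i = 0 := by
    have : ((∑ i, w i * v i : ℤ) : ℚ) = 0 := by rw [castdot, hut2, mul_zero]
    exact_mod_cast this
  have hws : ∀ s ∈ S, 0 ≤ ∑ i, w i * s i := by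
    intro s hs
    have : (0:ℚ) ≤ ((∑ i, w i * s i : ℤ) : ℚ) := by
      rw [castdot]; exact mul_nonneg hd.le (hut1 s hs)
    exact_mod_cast this
  have hwr : ∀ s ∈ rest, 0 < ∑ i, w i * s i := by
    intro s hs
    have : (0:ℚ) < ((∑ i, w i * s i : ℤ) : ℚ) := by
      rw [castdot]; exact mul_pos hd (hut3 s hs)
    exact_mod_cast this
  -- Step 3: generators on the ray pair to zero with any m ∈ ρ^⊥
  have hrayzero : ∀ s, Ray s → ∀ m : Fin n → ℤ, (∑ i, m i * v i = 0) → ∑ i, m i * s i = 0 := by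
    intro s hray m hm
    obtain ⟨t, ht0, hts⟩ := hray
    have h1 : ((∑ i, m i * s i : ℤ) : ℝ) = t * ((∑ i, m i * v i : ℤ) : ℝ) := by
      push_cast
      rw [Finset.mul_sum]
      refine Finset.sum_congr rfl fun i _ => ?_
      have h2 := congrFun hts i
      simp only [Pi.smul_apply, smul_eq_mul] at h2
      rw [h2]; ring
    rw [hm] at h1
    simp only [Int.cast_zero, mul_zero] at h1
    exact_mod_cast h1
  -- the target subgroup
  set K : AddSubgroup (Fin n → ℤ) :=
    { carrier := {m | ∑ i, m i * v i = 0}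
      zero_mem' := by simp
      add_mem' := by
        intro a b ha hb
        simp only [Set.mem_setOf_eq, Pi.add_apply, add_mul, Finset.sum_add_distrib] at *
        rw [ha, hb, add_zero]
      neg_mem' := by
        intro a ha
        simp only [Set.mem_setOf_eq, Pi.neg_apply, neg_mul, Finset.sum_neg_distrib] at *
        rw [ha, neg_zero] } with hK
  ext m
  simp only [SetLike.mem_coe, Set.mem_setOf_eq]
  constructor
  · intro hm
    have hle : AddSubgroup.closure
        {m : Fin n → ℤ | (∀ s ∈ S, 0 ≤ ∑ i, m i * s i) ∧ ∑ i, m i * v i = 0} ≤ K :=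
      (AddSubgroup.closure_le K).mpr (fun x hx => hx.2)
    exact hle hm
  · intro hm
    set k : ℤ := ∑ s ∈ S, |∑ i, m i * s i| with hk
    have hk0 : 0 ≤ k := Finset.sum_nonneg fun s _ => abs_nonneg _
    have expand : ∀ (s : Fin n → ℤ), ∑ i, (m + k • w) i * s i
        = (∑ i, m i * s i) + k * ∑ i, w i * s i := by
      intro s
      simp only [Pi.add_apply, Pi.smul_apply, smul_eq_mul, add_mul, Finset.sum_add_distrib,
        Finset.mul_sum, mul_assoc]
    have hwmem : w ∈ {m : Fin n → ℤ | (∀ s ∈ S, 0 ≤ ∑ i, m i * s i) ∧ ∑ i, m i * v i = 0} :=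
      ⟨hws, hwv⟩
    have hmem : m + k • w ∈
        {m : Fin n → ℤ | (∀ s ∈ S, 0 ≤ ∑ i, m i * s i) ∧ ∑ i, m i * v i = 0} := by
      constructor
      · intro s hs
        rw [expand s]
        by_cases hray : Ray s
        · rw [hrayzero s hray m hm, zero_add]
          exact mul_nonneg hk0 (hws s hs)
        · have hsr : s ∈ rest := Finset.mem_filter.mpr ⟨hs, hray⟩
          have h1 : 1 ≤ ∑ i, w i * s i := hwr s hsr
          have h2 : |∑ i, m i * s i| ≤ k := by
            rw [hk]
            exact Finset.single_le_sum (fun s _ => abs_nonneg (∑ i, m i * s i)) hs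
          have h3 : k * 1 ≤ k * ∑ i, w i * s i := mul_le_mul_of_nonneg_left h1 hk0
          have h4 := neg_abs_le (∑ i, m i * s i)
          linarith
      · rw [expand v, hm, hwv, mul_zero, add_zero]
    have hrw : m = (m + k • w) - k • w := by abel
    rw [hrw]
    exact sub_mem (AddSubgroup.subset_closure hmem)
      (zsmul_mem (AddSubgroup.subset_closure hwmem) k)
end

section
/- For every finite subgroup F of SL_n(ℤ) there exists a prime p such that F intersects the principal congruence subgroup Γ_p (the kernel of reduction mod p, SL_n(ℤ) → SL_n(ℤ/pℤ)) only in the identity matrix. -/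
/-- For every finite subgroup `F` of `SL_n(ℤ)` there is a prime `p` such that `F`
meets the principal congruence subgroup `Γ_p = ker(SL_n(ℤ) → SL_n(ℤ/pℤ))` only in the
identity. -/
theorem finite_subgroup_meets_congruence_subgroup_trivially
    (n : ℕ) (F : Subgroup (Matrix.SpecialLinearGroup (Fin n) ℤ)) (hF : Finite F) :
    ∃ p : ℕ, p.Prime ∧ ∀ A ∈ F,
      Matrix.SpecialLinearGroup.map (Int.castRingHom (ZMod p)) A = 1 → A = 1 := by
  haveI := hF
  set g : F × Fin n × Fin n → ℕ := fun x =>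
    (((x.1 : Matrix.SpecialLinearGroup (Fin n) ℤ) : Matrix (Fin n) (Fin n) ℤ) x.2.1 x.2.2
      - (1 : Matrix (Fin n) (Fin n) ℤ) x.2.1 x.2.2).natAbs with hg
  obtain ⟨N, hN⟩ := Finite.exists_le g
  obtain ⟨p, hpN, hp⟩ := Nat.exists_infinite_primes (N + 1)
  refine ⟨p, hp, fun A hA hmap => ?_⟩
  have hcoe : ((A : Matrix (Fin n) (Fin n) ℤ)).map (Int.cast : ℤ → ZMod p)
      = (1 : Matrix (Fin n) (Fin n) (ZMod p)) := by
    have := congrArg (fun M : Matrix.SpecialLinearGroup (Fin n) (ZMod p) =>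
      (M : Matrix (Fin n) (Fin n) (ZMod p))) hmap
    simpa using this
  have key : ∀ i j, (A : Matrix (Fin n) (Fin n) ℤ) i j
      = (1 : Matrix (Fin n) (Fin n) ℤ) i j := by
    intro i j
    have hdvd : (p : ℤ) ∣ ((A : Matrix (Fin n) (Fin n) ℤ) i j
        - (1 : Matrix (Fin n) (Fin n) ℤ) i j) := by
      rw [← ZMod.intCast_zmod_eq_zero_iff_dvd]
      have h1 : (((A : Matrix (Fin n) (Fin n) ℤ) i j : ℤ) : ZMod p)
          = (1 : Matrix (Fin n) (Fin n) (ZMod p)) i j := by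
        have := congrFun (congrFun hcoe i) j
        simpa [Matrix.map_apply] using this
      push_cast
      rw [h1]
      simp [Matrix.one_apply]
    have hle : ((A : Matrix (Fin n) (Fin n) ℤ) i j
        - (1 : Matrix (Fin n) (Fin n) ℤ) i j).natAbs ≤ N := hN ⟨⟨A, hA⟩, i, j⟩
    have hdvd' : p ∣ ((A : Matrix (Fin n) (Fin n) ℤ) i j
        - (1 : Matrix (Fin n) (Fin n) ℤ) i j).natAbs :=
      Int.natAbs_dvd_natAbs.mpr (by simpa using hdvd)
    have h0 := Nat.eq_zero_of_dvd_of_lt hdvd' (lt_of_le_of_lt hle (by omega))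
    have := Int.natAbs_eq_zero.mp h0
    omega
  ext i j
  simpa using key i j
end

section
/- Let G be a group acting on a set X with a point x_0 whose orbit is all of X (transitive action restricted to an orbit W = G·x_0), let S be the stabilizer of x_0 and N_G(S) its normalizer. Then the map sending the right coset Sn ∈ S\N_G(S) to the transformation h·x_0 ↦ h n^{−1}·x_0 is a well-defined injective group homomorphism from S\N_G(S) onto the centralizer of (the image of) G in the symmetric group of W. -/
/-- For a transitive action of `G` on `X` with base point `x₀`, stabilizer `S`
and normalizer `N_G(S)`, the assignment `Sn ↦ (h·x₀ ↦ h n⁻¹·x₀)` is a well-defined injective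
group homomorphism from `S\N_G(S)` onto the centralizer of the image of `G` in `Sym(X)`. -/
theorem quotient_normalizer_iso_centralizer
    {G X : Type} [Group G] [MulAction G X] (x₀ : X)
    (htrans : ∀ x : X, ∃ g : G, g • x₀ = x) :
    ∃ Φ : ((Subgroup.normalizer (MulAction.stabilizer G x₀ : Set G)) ⧸
        (MulAction.stabilizer G x₀).subgroupOf (Subgroup.normalizer (MulAction.stabilizer G x₀ : Set G)))
        →* Equiv.Perm X,
      Function.Injective Φ ∧
      (∀ (nn : (Subgroup.normalizer (MulAction.stabilizer G x₀ : Set G))) (g : G),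
          Φ (QuotientGroup.mk nn) (g • x₀) = g • ((nn : G)⁻¹ • x₀)) ∧
      Φ.range = Subgroup.centralizer ((MulAction.toPermHom G X).range : Set (Equiv.Perm X)) := by
  classical
  set S := MulAction.stabilizer G x₀ with hSdef
  set N := Subgroup.normalizer (S : Set G) with hNdef
  -- key well-definedness fact
  have key : ∀ (n : N) (g g' : G), g • x₀ = g' • x₀ →
      g • ((n : G)⁻¹ • x₀) = g' • ((n : G)⁻¹ • x₀) := by
    intro n g g' h
    have hmem : g'⁻¹ * g ∈ S := by
      rw [hSdef, MulAction.mem_stabilizer_iff, mul_smul, h, ← mul_smul, inv_mul_cancel, one_smul]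
    have hn := (Subgroup.mem_normalizer_iff.mp n.2 (g'⁻¹ * g)).mp hmem
    rw [hSdef, MulAction.mem_stabilizer_iff] at hn
    have h2 := congrArg (fun y => (g' * (n : G)⁻¹) • y) hn
    simp only [← mul_smul] at h2
    calc g • ((n : G)⁻¹ • x₀) = (g * (n : G)⁻¹) • x₀ := (mul_smul _ _ _).symm
      _ = (g' * (n : G)⁻¹ * ((n : G) * (g'⁻¹ * g) * (n : G)⁻¹)) • x₀ := by group
      _ = (g' * (n : G)⁻¹) • x₀ := h2
      _ = g' • ((n : G)⁻¹ • x₀) := mul_smul _ _ _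
  -- the underlying function
  set f : N → X → X := fun n x => (htrans x).choose • ((n : G)⁻¹ • x₀) with hfdef
  have hf : ∀ (n : N) (g : G), f n (g • x₀) = g • ((n : G)⁻¹ • x₀) := fun n g =>
    key n _ g (htrans (g • x₀)).choose_spec
  have hx : ∀ x : X, (htrans x).choose • x₀ = x := fun x => (htrans x).choose_spec
  have f_one : ∀ x, f (1 : N) x = x := by
    intro x
    simp only [hfdef, OneMemClass.coe_one, inv_one, one_smul]
    exact hx x
  have f_mul : ∀ (n m : N) (x : X), f (n * m) x = f n (f m x) := by
    intro n m x
    calc f (n * m) x = f (n * m) ((htrans x).choose • x₀) := by rw [hx]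
      _ = (htrans x).choose • ((↑(n * m) : G)⁻¹ • x₀) := hf _ _
      _ = ((htrans x).choose * ((m : G))⁻¹) • ((n : G)⁻¹ • x₀) := by
          simp [mul_smul]
      _ = f n (((htrans x).choose * ((m : G))⁻¹) • x₀) := (hf _ _).symm
      _ = f n ((htrans x).choose • ((m : G)⁻¹ • x₀)) := by rw [mul_smul]
      _ = f n (f m ((htrans x).choose • x₀)) := by rw [hf m]
      _ = f n (f m x) := by rw [hx]
  -- the homomorphism N →* Perm X
  set Ψ : N →* Equiv.Perm X :=
    { toFun := fun n =>
        ⟨f n, f n⁻¹,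
          fun x => by rw [← f_mul, inv_mul_cancel, f_one],
          fun x => by rw [← f_mul, mul_inv_cancel, f_one]⟩
      map_one' := Equiv.ext fun x => f_one x
      map_mul' := fun n m => Equiv.ext fun x => f_mul n m x } with hΨdef
  have hΨapp : ∀ (n : N) (x : X), Ψ n x = f n x := fun n x => rfl
  -- kernel of Ψ
  have hker : Ψ.ker = S.subgroupOf N := by
    ext n
    constructor
    · intro hn
      have h1 : Ψ n ((1 : G) • x₀) = (1 : G) • x₀ := by
        rw [MonoidHom.mem_ker.mp hn]; rfl
      rw [hΨapp, hf, one_smul, one_smul] at h1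
      have h2 : (n : G)⁻¹ ∈ S := h1
      have h3 : (n : G) ∈ S := by simpa using inv_mem h2
      exact Subgroup.mem_subgroupOf.mpr h3
    · intro hn
      have hnS : (n : G) ∈ S := Subgroup.mem_subgroupOf.mp hn
      have hinv : (n : G)⁻¹ • x₀ = x₀ := inv_mem hnS
      refine MonoidHom.mem_ker.mpr ?_
      ext x
      calc Ψ n x = f n ((htrans x).choose • x₀) := by rw [hΨapp, hx]
        _ = (htrans x).choose • ((n : G)⁻¹ • x₀) := hf _ _
        _ = x := by rw [hinv, hx]
        _ = (1 : Equiv.Perm X) x := rfl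
  -- define Φ
  refine ⟨QuotientGroup.lift (S.subgroupOf N) Ψ (fun n hn =>
    (by rw [hker]; exact hn)), ?_, ?_, ?_⟩
  · -- injectivity
    intro a b
    refine QuotientGroup.induction_on a fun n => QuotientGroup.induction_on b fun m => ?_
    intro h
    simp only [QuotientGroup.lift_mk] at h
    rw [QuotientGroup.eq, ← hker]
    exact MonoidHom.mem_ker.mpr (by rw [map_mul, map_inv, h, inv_mul_cancel])
  · -- the formula
    intro nn g
    exact hf nn g
  · -- range is the centralizer
    ext σ
    simp only [MonoidHom.mem_range]
    constructor
    · rintro ⟨q, rfl⟩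
      refine QuotientGroup.induction_on q fun n => ?_
      rw [Subgroup.mem_centralizer_iff]
      rintro p ⟨g, rfl⟩
      ext x
      simp only [QuotientGroup.lift_mk, Equiv.Perm.mul_apply]
      calc (MulAction.toPermHom G X g) (Ψ n x) = g • Ψ n x := rfl
        _ = g • f n ((htrans x).choose • x₀) := by rw [hΨapp, hx]
        _ = g • ((htrans x).choose • ((n : G)⁻¹ • x₀)) := by rw [hf]
        _ = (g * (htrans x).choose) • ((n : G)⁻¹ • x₀) := by rw [mul_smul]
        _ = f n ((g * (htrans x).choose) • x₀) := (hf _ _).symm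
        _ = f n (g • x) := by rw [mul_smul, hx]
        _ = Ψ n ((MulAction.toPermHom G X g) x) := rfl
    · intro hσ
      rw [Subgroup.mem_centralizer_iff] at hσ
      have hcomm : ∀ (g : G) (x : X), σ (g • x) = g • σ x := by
        intro g x
        have h1 := hσ (MulAction.toPermHom G X g) ⟨g, rfl⟩
        have h2 := DFunLike.congr_fun h1 x
        simpa [Equiv.Perm.mul_apply] using h2.symm
      obtain ⟨m, hm⟩ := htrans (σ x₀)
      have hσx₀ : ((m⁻¹ : G))⁻¹ • x₀ = σ x₀ := by rw [inv_inv]; exact hm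
      have hnN : m⁻¹ ∈ N := by
        rw [hNdef, Subgroup.mem_normalizer_iff]
        intro s
        constructor
        · intro hs
          have hs' : s • x₀ = x₀ := hs
          rw [hSdef, MulAction.mem_stabilizer_iff]
          rw [mul_smul, mul_smul, hσx₀, ← hcomm, hs', ← hσx₀, inv_inv, ← mul_smul,
            inv_mul_cancel, one_smul]
        · intro hs
          have hs' : (m⁻¹ * s * m⁻¹⁻¹) • x₀ = x₀ := hs
          rw [hSdef, MulAction.mem_stabilizer_iff]
          rw [mul_smul, mul_smul, inv_inv] at hs'
          have h2 : s • (m • x₀) = m • x₀ := by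
            have h3 := congrArg (fun y => m • y) hs'
            simpa [← mul_smul] using h3
          rw [hm, ← hcomm] at h2
          exact σ.injective h2
      refine ⟨QuotientGroup.mk (⟨m⁻¹, hnN⟩ : N), ?_⟩
      ext x
      rw [QuotientGroup.lift_mk]
      calc Ψ ⟨m⁻¹, hnN⟩ x = f ⟨m⁻¹, hnN⟩ ((htrans x).choose • x₀) := by rw [hΨapp, hx]
        _ = (htrans x).choose • (((m⁻¹ : G))⁻¹ • x₀) := hf _ _
        _ = (htrans x).choose • σ x₀ := by rw [hσx₀]
        _ = σ ((htrans x).choose • x₀) := (hcomm _ _).symm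
        _ = σ x := by rw [hx]
end
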